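/- Let Γ be a (discrete) group with property (T): every unitary representation of Γ on a complex Hilbert space that has almost invariant vectors admits a nonzero invariant vector. Then Γ is finitely generated. -/

import Mathlib

universe u
open scoped ENNReal
noncomputable section
namespace PropertyTFG
variable {ι : Type u}
lemma two_toReal_pos : 0 < (2 : ℝ≥0∞).toReal := by norm_num
lemma memℓp_comp (e : ι ≃ ι) (f : lp (fun _ : ι => ℂ) 2) :
    Memℓp (fun i => f (e i)) 2 := by
  apply memℓp_gen
  have h := (lp.memℓp f).summable two_toReal_pos
  exact (e.summable_iff (f := fun i => ‖f i‖ ^ (2 : ℝ≥0∞).toReal)).2 h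
def lpCongr (e : ι ≃ ι) : lp (fun _ : ι => ℂ) 2 ≃ₗᵢ[ℂ] lp (fun _ : ι => ℂ) 2 where
  toFun f := ⟨fun i => f (e.symm i), memℓp_comp e.symm f⟩
  invFun f := ⟨fun i => f (e i), memℓp_comp e f⟩
  map_add' f g := by ext i; simp [lp.coeFn_add]; rfl
  map_smul' c f := by ext i; simp [lp.coeFn_smul]
  left_inv f := by ext i; simp
  right_inv f := by ext i; simp
  norm_map' f := by
    rw [lp.norm_eq_tsum_rpow two_toReal_pos, lp.norm_eq_tsum_rpow two_toReal_pos f]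
    congr 1
    exact e.symm.tsum_eq (f := fun i => ‖f i‖ ^ (2 : ℝ≥0∞).toReal)
@[simp] lemma lpCongr_apply (e : ι ≃ ι) (f : lp (fun _ : ι => ℂ) 2) (i : ι) :
    (lpCongr e f : ∀ _ : ι, ℂ) i = f (e.symm i) := rfl
def lpCongrHom :
    Equiv.Perm ι →* (lp (fun _ : ι => ℂ) 2 ≃ₗᵢ[ℂ] lp (fun _ : ι => ℂ) 2) where
  toFun e := lpCongr e
  map_one' := by
    apply LinearIsometryEquiv.ext; intro f; apply lp.ext; funext i; rfl
  map_mul' e₁ e₂ := by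
    apply LinearIsometryEquiv.ext; intro f; apply lp.ext; funext i; rfl
def TIndex (Γ : Type u) [Group Γ] : Type u := Σ Δ : {Δ : Subgroup Γ // Δ.FG}, Γ ⧸ Δ.1
instance (Γ : Type u) [Group Γ] : MulAction Γ (TIndex Γ) where
  smul γ i := ⟨i.1, γ • i.2⟩
  one_smul i := by
    show (⟨i.1, (1 : Γ) • i.2⟩ : TIndex Γ) = ⟨i.1, i.2⟩
    rw [one_smul]
  mul_smul a b i := by
    show (⟨i.1, (a * b) • i.2⟩ : TIndex Γ) = ⟨i.1, a • b • i.2⟩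
    rw [mul_smul]
@[simp] lemma smul_tindex {Γ : Type u} [Group Γ] (γ : Γ) (i : TIndex Γ) :
    γ • i = ⟨i.1, γ • i.2⟩ := rfl
def rep (Γ : Type u) [Group Γ] :
    Γ →* (lp (fun _ : TIndex Γ => ℂ) 2 ≃ₗᵢ[ℂ] lp (fun _ : TIndex Γ => ℂ) 2) :=
  lpCongrHom.comp (MulAction.toPermHom Γ (TIndex Γ))
lemma rep_apply {Γ : Type u} [Group Γ] (γ : Γ) (f : lp (fun _ : TIndex Γ => ℂ) 2)
    (i : TIndex Γ) : (rep Γ γ f : ∀ _ : TIndex Γ, ℂ) i = f (γ⁻¹ • i) := rfl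
/-- A group with a finitely generated subgroup of finite index is finitely generated. -/
lemma fg_of_fg_finiteIndex {G : Type*} [Group G] (H : Subgroup G) (hH : H.FG)
    (hfin : Finite (G ⧸ H)) : Group.FG G := by
  obtain ⟨S, hS⟩ := hH
  rw [Group.fg_iff]
  refine ⟨(S : Set G) ∪ Set.range (fun q : G ⧸ H => q.out), ?_, ?_⟩
  · rw [eq_top_iff]
    intro g _
    have htg : (QuotientGroup.mk g : G ⧸ H).out⁻¹ * g ∈ H :=
      QuotientGroup.eq.mp (QuotientGroup.out_eq' (QuotientGroup.mk g : G ⧸ H))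
    have ht1 : (QuotientGroup.mk g : G ⧸ H).out
        ∈ Subgroup.closure ((S : Set G) ∪ Set.range (fun q : G ⧸ H => q.out)) :=
      Subgroup.subset_closure (Set.mem_union_right _ ⟨QuotientGroup.mk g, rfl⟩)
    have ht2 : (QuotientGroup.mk g : G ⧸ H).out⁻¹ * g
        ∈ Subgroup.closure ((S : Set G) ∪ Set.range (fun q : G ⧸ H => q.out)) := by
      have hle : H ≤ Subgroup.closure ((S : Set G) ∪ Set.range (fun q : G ⧸ H => q.out)) := by
        rw [← hS]
        exact Subgroup.closure_mono Set.subset_union_left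
      exact hle htg
    have := mul_mem ht1 ht2
    simpa using this
  · exact Set.Finite.union S.finite_toSet (Set.finite_range _)

end PropertyTFG
open PropertyTFG

/-- A discrete group with property (T) — every unitary representation on a complex Hilbert
space with almost invariant vectors has a nonzero invariant vector — is finitely
generated. -/
theorem fg_of_property_T {Γ : Type u} [Group Γ]
    (hT : ∀ (H : Type u) [NormedAddCommGroup H] [InnerProductSpace ℂ H] [CompleteSpace H]
      (ρ : Γ →* (H ≃ₗᵢ[ℂ] H)),
      (∀ (K : Finset Γ) (ε : ℝ), 0 < ε →
        ∃ v : H, v ≠ 0 ∧ ∀ k ∈ K, ‖ρ k v - v‖ < ε * ‖v‖) →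
      ∃ v : H, v ≠ 0 ∧ ∀ γ : Γ, ρ γ v = v) :
    Group.FG Γ := by
  classical
  have hai : ∀ (K : Finset Γ) (ε : ℝ), 0 < ε →
      ∃ v : lp (fun _ : TIndex Γ => ℂ) 2, v ≠ 0 ∧ ∀ k ∈ K, ‖rep Γ k v - v‖ < ε * ‖v‖ := by
    intro K ε hε
    have hΔfg : (Subgroup.closure (K : Set Γ)).FG := ⟨K, rfl⟩
    set i₀ : TIndex Γ := ⟨⟨Subgroup.closure (K : Set Γ), hΔfg⟩, QuotientGroup.mk 1⟩ with hi₀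
    have hv0 : (lp.single 2 i₀ (1 : ℂ) : lp (fun _ : TIndex Γ => ℂ) 2) ≠ 0 := by
      intro h
      have := congr_fun (congr_arg (Subtype.val) h) i₀
      simp [lp.single_apply_self] at this
    refine ⟨lp.single 2 i₀ (1 : ℂ), hv0, ?_⟩
    intro k hk
    have hfix : k⁻¹ • i₀ = i₀ := by
      have hkΔ : k⁻¹ ∈ Subgroup.closure (K : Set Γ) :=
        inv_mem (Subgroup.subset_closure hk)
      rw [smul_tindex, hi₀]
      have : k⁻¹ • (QuotientGroup.mk 1 : Γ ⧸ Subgroup.closure (K : Set Γ))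
          = QuotientGroup.mk 1 := by
        rw [MulAction.Quotient.smul_mk, smul_eq_mul, mul_one, QuotientGroup.eq]
        simpa using hkΔ
      rw [this]
    have heq : rep Γ k (lp.single 2 i₀ (1 : ℂ)) = lp.single 2 i₀ (1 : ℂ) := by
      apply lp.ext
      funext i
      rw [rep_apply]
      rcases eq_or_ne i i₀ with rfl | hne
      · rw [hfix]
      · have hne' : k⁻¹ • i ≠ i₀ := by
          intro h
          apply hne
          calc i = k • k⁻¹ • i := (smul_inv_smul k i).symm
            _ = k • i₀ := by rw [h]
            _ = k • k⁻¹ • i₀ := by rw [hfix]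
            _ = i₀ := smul_inv_smul k i₀
        rw [lp.single_apply_ne 2 i₀ _ hne', lp.single_apply_ne 2 i₀ _ hne]
    rw [heq, sub_self, norm_zero]
    have hv : (0 : ℝ) < ‖(lp.single 2 i₀ (1 : ℂ) : lp (fun _ : TIndex Γ => ℂ) 2)‖ :=
      norm_pos_iff.mpr hv0
    positivity
  obtain ⟨f, hf0, hinv⟩ := hT _ (rep Γ) hai
  have hex : ∃ i : TIndex Γ, (f : ∀ _ : TIndex Γ, ℂ) i ≠ 0 := by
    by_contra h
    push_neg at h
    exact hf0 (lp.ext (funext h))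
  obtain ⟨⟨Δ, x⟩, hx⟩ := hex
  have hconst : ∀ y : Γ ⧸ Δ.1, (f : ∀ _ : TIndex Γ, ℂ) ⟨Δ, y⟩ = (f : ∀ _ : TIndex Γ, ℂ) ⟨Δ, x⟩ := by
    intro y
    obtain ⟨γ, rfl⟩ : ∃ γ : Γ, γ • x = y := by
      obtain ⟨a⟩ := x
      obtain ⟨b⟩ := y
      refine ⟨b * a⁻¹, ?_⟩
      show (b * a⁻¹) • (QuotientGroup.mk a : Γ ⧸ Δ.1) = QuotientGroup.mk b
      rw [MulAction.Quotient.smul_mk, smul_eq_mul]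
      congr 1
      group
    have hfe := congr_fun (congr_arg (Subtype.val) (hinv γ⁻¹)) ⟨Δ, x⟩
    have hfe : (f : ∀ _ : TIndex Γ, ℂ) ((γ⁻¹)⁻¹ • (⟨Δ, x⟩ : TIndex Γ)) = (f : ∀ _ : TIndex Γ, ℂ) ⟨Δ, x⟩ := hfe
    have : (γ⁻¹)⁻¹ • (⟨Δ, x⟩ : TIndex Γ) = ⟨Δ, γ • x⟩ := by
      rw [inv_inv]; rfl
    rw [this] at hfe
    exact hfe
  have hfin : Finite (Γ ⧸ Δ.1) := by
    have hcpos : 0 < ‖(f : ∀ _ : TIndex Γ, ℂ) ⟨Δ, x⟩‖ ^ (2 : ℝ≥0∞).toReal :=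
      Real.rpow_pos_of_pos (by simpa using hx) _
    have hsum := (lp.memℓp f).summable two_toReal_pos
    have hev : ∀ᶠ i in Filter.cofinite,
        ‖(f : ∀ _ : TIndex Γ, ℂ) i‖ ^ (2 : ℝ≥0∞).toReal
          < ‖(f : ∀ _ : TIndex Γ, ℂ) ⟨Δ, x⟩‖ ^ (2 : ℝ≥0∞).toReal :=
      hsum.tendsto_cofinite_zero.eventually
        (Filter.Tendsto.eventually_lt_const hcpos Filter.tendsto_id)
    rw [Filter.eventually_cofinite] at hev
    have hsub : (Set.range (fun y : Γ ⧸ Δ.1 => (⟨Δ, y⟩ : TIndex Γ))) ⊆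
        {i : TIndex Γ | ¬ ‖(f : ∀ _ : TIndex Γ, ℂ) i‖ ^ (2 : ℝ≥0∞).toReal
          < ‖(f : ∀ _ : TIndex Γ, ℂ) ⟨Δ, x⟩‖ ^ (2 : ℝ≥0∞).toReal} := by
      rintro _ ⟨y, rfl⟩
      show ¬ ‖(f : ∀ _ : TIndex Γ, ℂ) ⟨Δ, y⟩‖ ^ (2 : ℝ≥0∞).toReal
          < ‖(f : ∀ _ : TIndex Γ, ℂ) ⟨Δ, x⟩‖ ^ (2 : ℝ≥0∞).toReal
      rw [hconst y]
      exact lt_irrefl _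
    have hfr : (Set.range (fun y : Γ ⧸ Δ.1 => (⟨Δ, y⟩ : TIndex Γ))).Finite := hev.subset hsub
    have hginj : Function.Injective (fun y : Γ ⧸ Δ.1 => (⟨Δ, y⟩ : TIndex Γ)) := by
      intro a b h
      simpa using h
    rw [← Set.finite_univ_iff]
    apply Set.Finite.of_finite_image _ hginj.injOn
    simpa [Set.image_univ] using hfr
  exact fg_of_fg_finiteIndex Δ.1 Δ.2 hfin
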